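/- (Lemma 5.2.) Let α be a sorted (dis)equality conjunction and w̄ a finite set of variables. Then Π(α, w̄) and α are equi-satisfiable: there exists a stack satisfying α if and only if there exists a stack satisfying Π(α, w̄). -/

import Mathlib

/-- An atom of a (dis)equality conjunction: `v₁ = v₂` or `v₁ ≠ v₂`. -/
inductive Atom (Var : Type) where
  | eq : Var → Var → Atom Var
  | ne : Var → Var → Atom Var

/-- A (dis)equality conjunction: a finite list of atoms, read conjunctively. -/
abbrev Conj (Var : Type) := List (Atom Var)

/-- A stack: a partial function from variables to values. -/
abbrev Stack (Var Val : Type) := Var → Option Val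

/-- `s'` extends `s`: `s'` agrees with `s` on the domain of `s`. -/
def Extends {Var Val : Type} (s s' : Stack Var Val) : Prop :=
  ∀ v x, s v = some x → s' v = some x

/-- An atom holds under a stack: both its variables lie in the domain of the
stack and the (dis)equality is true under the stack. -/
def Atom.holds {Var Val : Type} (s : Stack Var Val) : Atom Var → Prop
  | .eq v₁ v₂ => ∃ a b, s v₁ = some a ∧ s v₂ = some b ∧ a = b
  | .ne v₁ v₂ => ∃ a b, s v₁ = some a ∧ s v₂ = some b ∧ a ≠ b

/-- `s ⊨ α`: every variable occurring in `α` lies in the domain of `s` and every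
atom of `α` is true under `s`. -/
def Conj.sat {Var Val : Type} (s : Stack Var Val) (α : Conj Var) : Prop :=
  ∀ a ∈ α, a.holds s

/-- Substitute `v₂` for (every occurrence of) `v₁` in a variable. -/
def substVar {Var : Type} [DecidableEq Var] (v₁ v₂ u : Var) : Var :=
  if u = v₁ then v₂ else u

/-- Substitute `v₂` for `v₁` in an atom. -/
def Atom.subst {Var : Type} [DecidableEq Var] (v₁ v₂ : Var) : Atom Var → Atom Var
  | .eq a b => .eq (substVar v₁ v₂ a) (substVar v₁ v₂ b)
  | .ne a b => .ne (substVar v₁ v₂ a) (substVar v₁ v₂ b)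

/-- `α[v₂/v₁]`: substitute `v₂` for every occurrence of `v₁` in `α`. -/
def Conj.subst {Var : Type} [DecidableEq Var] (v₁ v₂ : Var) (α : Conj Var) : Conj Var :=
  α.map (Atom.subst v₁ v₂)

/-- `α` is sorted: all equality atoms precede all disequality atoms. -/
def Conj.Sorted {Var : Type} (α : Conj Var) : Prop :=
  ∃ es ds : Conj Var,
    (∀ a ∈ es, ∃ v₁ v₂, a = Atom.eq v₁ v₂) ∧
    (∀ a ∈ ds, ∃ v₁ v₂, a = Atom.ne v₁ v₂) ∧
    α = es ++ ds

/-- The projection `Π(α, w̄)` eliminating the existentially quantified variables `w̄`;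
the result `none` represents the formula `false`. -/
def proj {Var : Type} [DecidableEq Var] (w : Finset Var) : Conj Var → Option (Conj Var)
  | [] => some []
  | (Atom.eq v₁ v₂) :: rest =>
      if v₁ ∈ w then proj w (Conj.subst v₁ v₂ rest)
      else if v₂ ∈ w then proj w (Conj.subst v₂ v₁ rest)
      else (proj w rest).map (fun r => Atom.eq v₁ v₂ :: r)
  | (Atom.ne v₁ v₂) :: rest =>
      if v₁ = v₂ then none
      else if v₁ ∈ w ∨ v₂ ∈ w then proj w rest
      else (proj w rest).map (fun r => Atom.ne v₁ v₂ :: r)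
termination_by α => α.length
decreasing_by
  all_goals simp [Conj.subst]

/-- Satisfaction for the (possibly `false`) result of the projection. -/
def satP {Var Val : Type} (s : Stack Var Val) : Option (Conj Var) → Prop
  | none => False
  | some α => α.sat s

section Helpers

variable {Var Val : Type} [DecidableEq Var]

lemma sat_mono {s s' : Stack Var Val} (h : Extends s s') {α : Conj Var} (hα : α.sat s) :
    α.sat s' := by
  intro a ha
  have hh := hα a ha
  cases a with
  | eq v₁ v₂ =>
    obtain ⟨x, y, hx, hy, hxy⟩ := hh
    exact ⟨x, y, h _ _ hx, h _ _ hy, hxy⟩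
  | ne v₁ v₂ =>
    obtain ⟨x, y, hx, hy, hxy⟩ := hh
    exact ⟨x, y, h _ _ hx, h _ _ hy, hxy⟩

lemma holds_subst {s : Stack Var Val} (u v : Var) (a : Atom Var) :
    (a.subst u v).holds s ↔ a.holds (fun z => s (substVar u v z)) := by
  cases a <;> exact Iff.rfl

lemma sat_subst {s : Stack Var Val} (u v : Var) (α : Conj Var) :
    (Conj.subst u v α).sat s ↔ α.sat (fun z => s (substVar u v z)) := by
  constructor
  · intro h a ha
    exact (holds_subst u v a).mp (h (a.subst u v) (List.mem_map_of_mem ha))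
  · intro h a ha
    obtain ⟨b, hb, rfl⟩ := List.mem_map.mp ha
    exact (holds_subst u v b).mpr (h b hb)

lemma subst_length (u v : Var) (α : Conj Var) : (Conj.subst u v α).length = α.length :=
  List.length_map _

/-- Forward direction: a stack satisfying `α` also satisfies `proj w α`. -/
lemma proj_forward (w : Finset Var) :
    ∀ n (α : Conj Var) (s : Stack Var Val), α.length ≤ n → α.sat s → satP s (proj w α) := by
  intro n
  induction n with
  | zero =>
    intro α s hlen hs
    have : α = [] := List.length_eq_zero_iff.mp (Nat.le_zero.mp hlen)
    subst this
    rw [proj]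
    exact hs
  | succ n ih =>
    intro α s hlen hs
    match α with
    | [] =>
      rw [proj]; exact hs
    | Atom.eq v₁ v₂ :: rest =>
      obtain ⟨x, y, hx, hy, hxy⟩ := hs _ (List.mem_cons_self)
      have hrest : Conj.sat s rest := fun a ha => hs a (List.mem_cons_of_mem _ ha)
      have hlen' : rest.length ≤ n := Nat.le_of_succ_le_succ hlen
      rw [proj]
      by_cases h1 : v₁ ∈ w
      · rw [if_pos h1]
        apply ih _ s (by rw [subst_length]; exact hlen')
        rw [sat_subst]
        have hfun : (fun z => s (substVar v₁ v₂ z)) = s := by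
          funext z
          unfold substVar
          split
          · next h => subst h; rw [hx, hy, hxy]
          · rfl
        rw [hfun]; exact hrest
      · rw [if_neg h1]
        by_cases h2 : v₂ ∈ w
        · rw [if_pos h2]
          apply ih _ s (by rw [subst_length]; exact hlen')
          rw [sat_subst]
          have hfun : (fun z => s (substVar v₂ v₁ z)) = s := by
            funext z
            unfold substVar
            split
            · next h => subst h; rw [hx, hy, hxy]
            · rfl
          rw [hfun]; exact hrest
        · rw [if_neg h2]
          have := ih rest s hlen' hrest
          cases hp : proj w rest with
          | none => rw [hp] at this; exact this.elim
          | some r =>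
            rw [hp] at this
            simp only [Option.map_some]
            intro a ha
            rcases List.mem_cons.mp ha with rfl | ha'
            · exact ⟨x, y, hx, hy, hxy⟩
            · exact this a ha'
    | Atom.ne v₁ v₂ :: rest =>
      obtain ⟨x, y, hx, hy, hxy⟩ := hs _ (List.mem_cons_self)
      have hrest : Conj.sat s rest := fun a ha => hs a (List.mem_cons_of_mem _ ha)
      have hlen' : rest.length ≤ n := Nat.le_of_succ_le_succ hlen
      have hne : v₁ ≠ v₂ := by
        rintro rfl
        rw [hx] at hy
        exact hxy (Option.some_injective _ hy)
      rw [proj, if_neg hne]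
      by_cases h : v₁ ∈ w ∨ v₂ ∈ w
      · rw [if_pos h]; exact ih rest s hlen' hrest
      · rw [if_neg h]
        have := ih rest s hlen' hrest
        cases hp : proj w rest with
        | none => rw [hp] at this; exact this.elim
        | some r =>
          rw [hp] at this
          simp only [Option.map_some]
          intro a ha
          rcases List.mem_cons.mp ha with rfl | ha'
          · exact ⟨x, y, hx, hy, hxy⟩
          · exact this a ha'

/-- Variables of an atom. -/
def atomVars : Atom Var → List Var
  | .eq a b => [a, b]
  | .ne a b => [a, b]

/-- Variables of a conjunction. -/
def conjVars (α : Conj Var) : List Var := α.foldr (fun a acc => atomVars a ++ acc) []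

lemma mem_conjVars {α : Conj Var} {a : Atom Var} (ha : a ∈ α) {v : Var}
    (hv : v ∈ atomVars a) : v ∈ conjVars α := by
  induction α with
  | nil => cases ha
  | cons b β ihb =>
    rcases List.mem_cons.mp ha with rfl | ha'
    · exact List.mem_append.mpr (Or.inl hv)
    · exact List.mem_append.mpr (Or.inr (ihb ha'))

lemma exists_fresh [Infinite Val] (L : List Val) : ∃ c : Val, c ∉ L := by
  have hfin : ({x | x ∈ L} : Set Val).Finite := L.finite_toSet
  obtain ⟨c, hc⟩ := hfin.infinite_compl.nonempty
  exact ⟨c, hc⟩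

lemma sorted_tail_eq {v₁ v₂ : Var} {rest : Conj Var}
    (h : Conj.Sorted (Atom.eq v₁ v₂ :: rest)) : Conj.Sorted rest := by
  obtain ⟨es, ds, he, hd, heq⟩ := h
  cases es with
  | nil =>
    exfalso
    have : Atom.eq v₁ v₂ ∈ ds := by
      rw [List.nil_append] at heq
      rw [← heq]; exact List.mem_cons_self
    obtain ⟨a, b, hab⟩ := hd _ this
    cases hab
  | cons e es' =>
    simp only [List.cons_append, List.cons.injEq] at heq
    exact ⟨es', ds, fun a ha => he a (List.mem_cons_of_mem _ ha), hd, heq.2⟩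

lemma sorted_subst {α : Conj Var} (h : α.Sorted) (u v : Var) : (Conj.subst u v α).Sorted := by
  obtain ⟨es, ds, he, hd, heq⟩ := h
  refine ⟨Conj.subst u v es, Conj.subst u v ds, ?_, ?_, ?_⟩
  · intro a ha
    obtain ⟨b, hb, rfl⟩ := List.mem_map.mp ha
    obtain ⟨x, y, rfl⟩ := he b hb
    exact ⟨_, _, rfl⟩
  · intro a ha
    obtain ⟨b, hb, rfl⟩ := List.mem_map.mp ha
    obtain ⟨x, y, rfl⟩ := hd b hb
    exact ⟨_, _, rfl⟩
  · rw [heq]; exact List.map_append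

lemma sorted_head_ne {v₁ v₂ : Var} {rest : Conj Var}
    (h : Conj.Sorted (Atom.ne v₁ v₂ :: rest)) :
    Conj.Sorted rest ∧ ∀ a ∈ rest, ∃ x y, a = Atom.ne x y := by
  obtain ⟨es, ds, he, hd, heq⟩ := h
  cases es with
  | nil =>
    rw [List.nil_append] at heq
    have hsub : ∀ a ∈ rest, a ∈ ds := by
      intro a ha; rw [← heq]; exact List.mem_cons_of_mem _ ha
    exact ⟨⟨[], rest, fun a ha => absurd ha List.not_mem_nil,
      fun a ha => hd a (hsub a ha), (List.nil_append _).symm⟩,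
      fun a ha => hd a (hsub a ha)⟩
  | cons e es' =>
    exfalso
    simp only [List.cons_append, List.cons.injEq] at heq
    obtain ⟨a, b, hab⟩ := he e (List.mem_cons_self)
    cases heq.1.trans hab

/-- Helper for the equality-substitution case of the backward direction. -/
lemma eq_helper [Nonempty Val] (s' : Stack Var Val) (rest : Conj Var) (u v : Var)
    (hs : Conj.sat s' (Conj.subst u v rest)) :
    ∃ s'' : Stack Var Val,
      (∀ z, z ≠ u → z ≠ v → s'' z = s' z) ∧
      (∀ x, s' v = some x → s'' v = some x) ∧
      (Atom.eq u v).holds s'' ∧ Conj.sat s'' rest := by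
  classical
  obtain ⟨b₀⟩ := ‹Nonempty Val›
  set b : Val := (s' v).getD b₀ with hb
  refine ⟨fun z => if z = u then some b else if z = v then some b else s' z, ?_, ?_, ?_, ?_⟩
  · intro z hzu hzv; simp [hzu, hzv]
  · intro x hx
    have hbx : b = x := by rw [hb, hx]; rfl
    by_cases hvu : v = u <;> simp [hvu, hbx]
  · exact ⟨b, b, by simp, by by_cases hvu : v = u <;> simp [hvu], rfl⟩
  · have ht : Conj.sat (fun z => s' (substVar u v z)) rest := (sat_subst u v rest).mp hs
    apply sat_mono _ ht
    intro z x hx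
    by_cases hzu : z = u
    · subst hzu
      simp only [substVar, if_pos] at hx
      have hbx : b = x := by rw [hb, hx]; rfl
      simp [hbx]
    · by_cases hzv : z = v
      · subst hzv
        simp only [substVar] at hx
        rw [if_neg hzu] at hx
        have hbx : b = x := by rw [hb, hx]; rfl
        simp [hzu, hbx]
      · simp only [substVar, if_neg hzu] at hx
        simp [hzu, hzv, hx]

/-- Helper for the disequality case of the backward direction: extend/modify a stack
satisfying a conjunction of disequalities so that an extra disequality `u ≠ v` holds,
changing only the values at `u` and (if previously undefined) `v`. -/
lemma ne_helper [Infinite Val] (s' : Stack Var Val) (rest : Conj Var)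
    (hne : ∀ a ∈ rest, ∃ x y, a = Atom.ne x y)
    (hs : Conj.sat s' rest) (u v : Var) (huv : u ≠ v) :
    ∃ s'' : Stack Var Val,
      (∀ z, z ≠ u → z ≠ v → s'' z = s' z) ∧
      (∀ x, s' v = some x → s'' v = some x) ∧
      (Atom.ne u v).holds s'' ∧ Conj.sat s'' rest := by
  classical
  obtain ⟨b₀⟩ : Nonempty Val := inferInstance
  set b : Val := (s' v).getD b₀ with hb
  set s₁ : Stack Var Val := fun z => if z = v then some b else s' z with hs₁
  have hvu : ¬ v = u := fun h => huv h.symm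
  have hext₁ : Extends s' s₁ := by
    intro z x hx
    by_cases hz : z = v
    · subst hz
      have hbx : b = x := by rw [hb, hx]; rfl
      simp [hs₁, hbx]
    · simp [hs₁, hz, hx]
  have hs₁v : s₁ v = some b := by simp [hs₁]
  have hs₁sat : Conj.sat s₁ rest := sat_mono hext₁ hs
  obtain ⟨c, hc⟩ := exists_fresh (Val := Val) (b :: (conjVars rest).filterMap s₁)
  refine ⟨fun z => if z = u then some c else s₁ z, ?_, ?_, ?_, ?_⟩
  · intro z hzu hzv
    simp [hs₁, hzu, hzv]
  · intro x hx
    have hbx : b = x := by rw [hb, hx]; rfl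
    simp [hs₁, hvu, hbx]
  · refine ⟨c, b, by simp, by simp [hvu, hs₁v], ?_⟩
    intro hcb
    exact hc (hcb ▸ List.mem_cons_self)
  · intro a ha
    obtain ⟨x, y, rfl⟩ := hne a ha
    obtain ⟨p, q, hp, hq, hpq⟩ := hs₁sat _ ha
    have hxmem : x ∈ conjVars rest := mem_conjVars ha (by simp [atomVars])
    have hymem : y ∈ conjVars rest := mem_conjVars ha (by simp [atomVars])
    by_cases hxu : x = u
    · by_cases hyu : y = u
      · exfalso
        rw [hxu] at hp
        rw [hyu, hp] at hq
        exact hpq (Option.some_injective _ hq)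
      · refine ⟨c, q, by simp [hxu], by simp only [if_neg hyu]; exact hq, ?_⟩
        intro hcq
        apply hc
        refine List.mem_cons_of_mem _ (List.mem_filterMap.mpr ⟨y, hymem, ?_⟩)
        rw [hq, hcq]
    · by_cases hyu : y = u
      · refine ⟨p, c, by simp only [if_neg hxu]; exact hp, by simp [hyu], ?_⟩
        intro hpc
        apply hc
        refine List.mem_cons_of_mem _ (List.mem_filterMap.mpr ⟨x, hxmem, ?_⟩)
        rw [hp, hpc]
      · exact ⟨p, q, by simp only [if_neg hxu]; exact hp,
          by simp only [if_neg hyu]; exact hq, hpq⟩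

/-- Backward direction: from a stack satisfying `proj w α` one can build a stack
satisfying `α`, agreeing with the original stack outside `w`. -/
lemma proj_backward (w : Finset Var) [Infinite Val] :
    ∀ n (α : Conj Var), α.length ≤ n → α.Sorted →
      ∀ s : Stack Var Val, satP s (proj w α) →
      ∃ s' : Stack Var Val, (∀ u, u ∉ w → ∀ x, s u = some x → s' u = some x) ∧ α.sat s' := by
  classical
  have : Nonempty Val := inferInstance
  intro n
  induction n with
  | zero =>
    intro α hlen _ s _
    have : α = [] := List.length_eq_zero_iff.mp (Nat.le_zero.mp hlen)
    subst this
    exact ⟨s, fun u _ x hx => hx, fun a ha => absurd ha List.not_mem_nil⟩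
  | succ n ih =>
    intro α hlen hsorted s hsat
    match α with
    | [] =>
      exact ⟨s, fun u _ x hx => hx, fun a ha => absurd ha List.not_mem_nil⟩
    | Atom.eq v₁ v₂ :: rest =>
      have hlen' : rest.length ≤ n := Nat.le_of_succ_le_succ hlen
      have hrs : Conj.Sorted rest := sorted_tail_eq hsorted
      rw [proj] at hsat
      by_cases h1 : v₁ ∈ w
      · rw [if_pos h1] at hsat
        obtain ⟨s', hext, hs'⟩ := ih (Conj.subst v₁ v₂ rest)
          (by rw [subst_length]; exact hlen') (sorted_subst hrs v₁ v₂) s hsat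
        obtain ⟨s'', hout, hv, hholds, hsat''⟩ := eq_helper s' rest v₁ v₂ hs'
        refine ⟨s'', ?_, ?_⟩
        · intro u hu x hx
          have hu1 : u ≠ v₁ := fun h => hu (h ▸ h1)
          by_cases hu2 : u = v₂
          · subst hu2; exact hv x (hext _ hu x hx)
          · rw [hout u hu1 hu2]; exact hext _ hu x hx
        · intro a ha
          rcases List.mem_cons.mp ha with rfl | ha'
          · exact hholds
          · exact hsat'' a ha'
      · rw [if_neg h1] at hsat
        by_cases h2 : v₂ ∈ w
        · rw [if_pos h2] at hsat
          obtain ⟨s', hext, hs'⟩ := ih (Conj.subst v₂ v₁ rest)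
            (by rw [subst_length]; exact hlen') (sorted_subst hrs v₂ v₁) s hsat
          obtain ⟨s'', hout, hv, hholds, hsat''⟩ := eq_helper s' rest v₂ v₁ hs'
          refine ⟨s'', ?_, ?_⟩
          · intro u hu x hx
            have hu2 : u ≠ v₂ := fun h => hu (h ▸ h2)
            by_cases hu1 : u = v₁
            · subst hu1; exact hv x (hext _ hu x hx)
            · rw [hout u hu2 hu1]; exact hext _ hu x hx
          · intro a ha
            rcases List.mem_cons.mp ha with rfl | ha'
            · obtain ⟨p, q, hp, hq, hpq⟩ := hholds
              exact ⟨q, p, hq, hp, hpq.symm⟩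
            · exact hsat'' a ha'
        · rw [if_neg h2] at hsat
          cases hp : proj w rest with
          | none => rw [hp] at hsat; exact hsat.elim
          | some r =>
            rw [hp, Option.map_some] at hsat
            have hhead : (Atom.eq v₁ v₂).holds s := hsat _ (List.mem_cons_self)
            have hr : satP s (proj w rest) := by
              rw [hp]
              exact fun a ha => hsat a (List.mem_cons_of_mem _ ha)
            obtain ⟨s', hext, hs'⟩ := ih rest hlen' hrs s hr
            refine ⟨s', hext, ?_⟩
            intro a ha
            rcases List.mem_cons.mp ha with rfl | ha'
            · obtain ⟨p, q, hpp, hqq, hpq⟩ := hhead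
              exact ⟨p, q, hext _ h1 p hpp, hext _ h2 q hqq, hpq⟩
            · exact hs' a ha'
    | Atom.ne v₁ v₂ :: rest =>
      have hlen' : rest.length ≤ n := Nat.le_of_succ_le_succ hlen
      obtain ⟨hrs, hallne⟩ := sorted_head_ne hsorted
      rw [proj] at hsat
      by_cases hne : v₁ = v₂
      · rw [if_pos hne] at hsat; exact hsat.elim
      · rw [if_neg hne] at hsat
        by_cases h : v₁ ∈ w ∨ v₂ ∈ w
        · rw [if_pos h] at hsat
          obtain ⟨s', hext, hs'⟩ := ih rest hlen' hrs s hsat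
          rcases h with h1 | h2
          · obtain ⟨s'', hout, hv, hholds, hsat''⟩ := ne_helper s' rest hallne hs' v₁ v₂ hne
            refine ⟨s'', ?_, ?_⟩
            · intro u hu x hx
              have hu1 : u ≠ v₁ := fun h => hu (h ▸ h1)
              by_cases hu2 : u = v₂
              · subst hu2; exact hv x (hext _ hu x hx)
              · rw [hout u hu1 hu2]; exact hext _ hu x hx
            · intro a ha
              rcases List.mem_cons.mp ha with rfl | ha'
              · exact hholds
              · exact hsat'' a ha'
          · obtain ⟨s'', hout, hv, hholds, hsat''⟩ :=
              ne_helper s' rest hallne hs' v₂ v₁ (Ne.symm hne)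
            refine ⟨s'', ?_, ?_⟩
            · intro u hu x hx
              have hu2 : u ≠ v₂ := fun h => hu (h ▸ h2)
              by_cases hu1 : u = v₁
              · subst hu1; exact hv x (hext _ hu x hx)
              · rw [hout u hu2 hu1]; exact hext _ hu x hx
            · intro a ha
              rcases List.mem_cons.mp ha with rfl | ha'
              · obtain ⟨p, q, hpp, hqq, hpq⟩ := hholds
                exact ⟨q, p, hqq, hpp, fun hqp => hpq hqp.symm⟩
              · exact hsat'' a ha'
        · rw [if_neg h] at hsat
          push_neg at h
          cases hp : proj w rest with
          | none => rw [hp] at hsat; exact hsat.elim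
          | some r =>
            rw [hp, Option.map_some] at hsat
            have hhead : (Atom.ne v₁ v₂).holds s := hsat _ (List.mem_cons_self)
            have hr : satP s (proj w rest) := by
              rw [hp]
              exact fun a ha => hsat a (List.mem_cons_of_mem _ ha)
            obtain ⟨s', hext, hs'⟩ := ih rest hlen' hrs s hr
            refine ⟨s', hext, ?_⟩
            intro a ha
            rcases List.mem_cons.mp ha with rfl | ha'
            · obtain ⟨p, q, hpp, hqq, hpq⟩ := hhead
              exact ⟨p, q, hext _ h.1 p hpp, hext _ h.2 q hqq, hpq⟩
            · exact hs' a ha'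

end Helpers

/-- Lemma 5.2: for a sorted (dis)equality conjunction `α` and a finite
set `w̄` of variables, `Π(α, w̄)` and `α` are equi-satisfiable. -/
theorem proj_equisat
    {Var Val : Type} [DecidableEq Var] [Countable Var] [Infinite Var] [Infinite Val]
    (α : Conj Var) (hsorted : α.Sorted) (w : Finset Var) :
    (∃ s : Stack Var Val, α.sat s) ↔ (∃ s : Stack Var Val, satP s (proj w α)) := by
  constructor
  · rintro ⟨s, hs⟩
    exact ⟨s, proj_forward w α.length α s le_rfl hs⟩
  · rintro ⟨s, hs⟩
    obtain ⟨s', _, hs'⟩ := proj_backward w α.length α le_rfl hsorted s hs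
    exact ⟨s', hs'⟩
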